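/- For every n and N there exists an m such that: if I is a path instance of length ℓ over a finite set A and 1 < a < b < ℓ are such that (1) each set B_i has cardinality at most N, (2) all sets B_i and all relations B_{i,i+1} are invariant under a chain of n Hagemann–Mitschke terms on A, and (3) there are at least m distinct indices j ∈ [a, b) such that B_{j,j+1} contains a backward edge, then the instance I_{[a,b]} is not subdirect. -/

import Mathlib

namespace CSPPaper

/-- A relational structure on `A`: a family of finitary relations (the basic
relations), a relation of arity `n` being a set of `n`-tuples `Fin n → A`. -/
structure RelStruct (A : Type) where
  basic : Set (Σ n : ℕ, Set (Fin n → A))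

/-- A CSP instance with variables `V` over domain `A`: a set of constraints,
each consisting of a scope (a tuple of variables) and a constraint relation. -/
structure Instance (A : Type) (V : Type) where
  constraints : Set (Σ n : ℕ, (Fin n → V) × Set (Fin n → A))

/-- `f : V → A` is a solution of the instance `I`. -/
def Instance.Sol {A V : Type} (I : Instance A V) (f : V → A) : Prop :=
  ∀ c ∈ I.constraints, (fun i => f (c.2.1 i)) ∈ c.2.2

def Instance.Satisfiable {A V : Type} (I : Instance A V) : Prop :=
  ∃ f, I.Sol f

/-- `I` is an instance of `CSP(𝔸)`: all its constraint relations are basic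
relations of `𝔸`. -/
def IsCSPInstance {A V : Type} (𝔸 : RelStruct A) (I : Instance A V) : Prop :=
  ∀ c ∈ I.constraints, (⟨c.1, c.2.2⟩ : Σ n : ℕ, Set (Fin n → A)) ∈ 𝔸.basic

/-- An atom of a Datalog rule over the variable set `Fin r`: a predicate
(a relation on `A`) applied to a tuple of variables. -/
structure Atom (A : Type) (r : ℕ) where
  arity : ℕ
  scope : Fin arity → Fin r
  rel : Set (Fin arity → A)

def Atom.holds {A : Type} {r : ℕ} (a : Atom A r) (f : Fin r → A) : Prop :=
  (fun i => f (a.scope i)) ∈ a.rel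

/-- A rule of the `r`-ary maximal symmetric Datalog program `𝒫_𝔸^r` consistent
with `𝔸`: a linear Datalog rule on at most `r` variables, whose head is an IDB
(an arbitrary relation on `A` of arity at most `r`), whose body contains at most
one IDB atom (`idb`) and otherwise non-IDB atoms for basic relations of `𝔸`
of arity at most `r` (`edb`, without repetition), such that the rule is
consistent with `𝔸`, and, if the body contains an IDB atom, its mirror image is
also consistent with `𝔸`. -/
structure Rule (A : Type) (𝔸 : RelStruct A) (r : ℕ) where
  head : Atom A r
  idb : Option (Atom A r)
  edb : List (Atom A r)
  head_arity : head.arity ≤ r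
  idb_arity : ∀ a ∈ idb, a.arity ≤ r
  edb_arity : ∀ a ∈ edb, a.arity ≤ r
  edb_basic : ∀ a ∈ edb, (⟨a.arity, a.rel⟩ : Σ n : ℕ, Set (Fin n → A)) ∈ 𝔸.basic
  nodup : edb.Nodup
  consistent : ∀ f : Fin r → A,
    (∀ a ∈ idb, a.holds f) → (∀ a ∈ edb, a.holds f) → head.holds f
  mirror : ∀ a ∈ idb, ∀ f : Fin r → A,
    head.holds f → (∀ b ∈ edb, b.holds f) → a.holds f

/-- `Derives 𝔸 r I ρ R`: the `r`-ary maximal symmetric Datalog program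
`𝒫_𝔸^r` consistent with `𝔸`, run on the instance `I`, derives `R(ρ)`.
This holds if `(ρ, R)` is a constraint of `I`, or if some rule of `𝒫_𝔸^r`
with head `R(τ)` admits an evaluation `ω` of its variables into `V` with
`ω ∘ τ = ρ`, whose (at most one) IDB body atom is derived and whose non-IDB
body atoms are constraints of `I` under `ω`. -/
inductive Derives {A V : Type} (𝔸 : RelStruct A) (r : ℕ) (I : Instance A V) :
    ∀ {n : ℕ}, (Fin n → V) → Set (Fin n → A) → Prop
  | base {n : ℕ} (ρ : Fin n → V) (R : Set (Fin n → A)) :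
      (⟨n, ρ, R⟩ : Σ n : ℕ, (Fin n → V) × Set (Fin n → A)) ∈ I.constraints →
      Derives 𝔸 r I ρ R
  | step (rule : Rule A 𝔸 r) (ω : Fin r → V) :
      (∀ a ∈ rule.idb, Derives 𝔸 r I (fun i => ω (a.scope i)) a.rel) →
      (∀ a ∈ rule.edb,
        (⟨a.arity, fun i => ω (a.scope i), a.rel⟩ :
          Σ n : ℕ, (Fin n → V) × Set (Fin n → A)) ∈ I.constraints) →
      Derives 𝔸 r I (fun i => ω (rule.head.scope i)) rule.head.rel

/-- `𝒫_𝔸^r(I) ⊢ G`: the program derives a goal predicate, i.e. an empty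
relation of arity at most `r`. -/
def DerivesGoal {A V : Type} (𝔸 : RelStruct A) (r : ℕ) (I : Instance A V) : Prop :=
  ∃ (n : ℕ) (ρ : Fin n → V), n ≤ r ∧ Derives 𝔸 r I ρ (∅ : Set (Fin n → A))

/-- `𝒫_𝔸^r(I) ⊢ J`: the program run on `I` derives every constraint of `J`. -/
def DerivesInstance {A V : Type} (𝔸 : RelStruct A) (r : ℕ) (I J : Instance A V) : Prop :=
  ∀ c ∈ J.constraints, Derives 𝔸 r I c.2.1 c.2.2

/-- An `m`-ary operation `t` preserves the `n`-ary relation `R`. -/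
def PreservesRel {A : Type} {m n : ℕ} (t : (Fin m → A) → A) (R : Set (Fin n → A)) : Prop :=
  ∀ rows : Fin m → Fin n → A, (∀ j, rows j ∈ R) → (fun i => t (fun j => rows j i)) ∈ R

/-- A polymorphism of `𝔸`: an operation preserving all basic relations. -/
def IsPolymorphism {A : Type} {m : ℕ} (𝔸 : RelStruct A) (t : (Fin m → A) → A) : Prop :=
  ∀ R ∈ 𝔸.basic, PreservesRel t R.2

def ternaryOp {A : Type} (p : A → A → A → A) : (Fin 3 → A) → A :=
  fun v => p (v 0) (v 1) (v 2)

/-- A chain of `n` Hagemann–Mitschke terms: idempotent ternary operations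
`p 0, …, p n` with `p 0 x y z = x`, `p k x x y = p (k+1) x y y`, `p n x y z = z`. -/
def IsHMChain {A : Type} (n : ℕ) (p : ℕ → A → A → A → A) : Prop :=
  (∀ k ≤ n, ∀ x : A, p k x x x = x) ∧
  (∀ x y z : A, p 0 x y z = x) ∧
  (∀ x y z : A, p n x y z = z) ∧
  (∀ k < n, ∀ x y : A, p k x x y = p (k + 1) x y y)

def Pres3Set {A : Type} (p : A → A → A → A) (S : Set A) : Prop :=
  ∀ x y z, x ∈ S → y ∈ S → z ∈ S → p x y z ∈ S

def Pres3Rel {A : Type} (p : A → A → A → A) (E : Set (A × A)) : Prop :=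
  ∀ u v w, u ∈ E → v ∈ E → w ∈ E → (p u.1 v.1 w.1, p u.2 v.2 w.2) ∈ E

def PresOpSet {A : Type} {m : ℕ} (t : (Fin m → A) → A) (S : Set A) : Prop :=
  ∀ x : Fin m → A, (∀ j, x j ∈ S) → t x ∈ S

def PresOpRel {A : Type} {m : ℕ} (t : (Fin m → A) → A) (E : Set (A × A)) : Prop :=
  ∀ x y : Fin m → A, (∀ j, (x j, y j) ∈ E) → (t x, t y) ∈ E

/-- A path instance of length `len`: variables `1, …, len`, one unary
constraint `B i` on each variable `i ∈ [1, len]`, and one binary constraint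
`E i` with scope `(i, i+1)` for each `i ∈ [1, len-1]`. -/
structure PathInstance (A : Type) where
  len : ℕ
  B : ℕ → Set A
  E : ℕ → Set (A × A)

/-- A solution of the subinstance of the path instance `I` induced by `[a, b]`. -/
def IsSolutionOn {A : Type} (I : PathInstance A) (a b : ℕ) (s : ℕ → A) : Prop :=
  (∀ i, a ≤ i → i ≤ b → s i ∈ I.B i) ∧
  (∀ i, a ≤ i → i + 1 ≤ b → (s i, s (i + 1)) ∈ I.E i)

def IsSolution {A : Type} (I : PathInstance A) (s : ℕ → A) : Prop :=
  IsSolutionOn I 1 I.len s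

def unaryRel {A : Type} (S : Set A) : Set (Fin 1 → A) := {f | f 0 ∈ S}

def pairRel {A : Type} (E : Set (A × A)) : Set (Fin 2 → A) := {f | (f 0, f 1) ∈ E}

/-- The path instance `I`, presented as a CSP instance on the variable set `ℕ`. -/
def PathInstance.toInstance {A : Type} (I : PathInstance A) : Instance A ℕ where
  constraints :=
    {c | (∃ i, 1 ≤ i ∧ i ≤ I.len ∧
            c = ⟨1, fun _ => i, unaryRel (I.B i)⟩) ∨
         (∃ i, 1 ≤ i ∧ i + 1 ≤ I.len ∧
            c = ⟨2, ![i, i + 1], pairRel (I.E i)⟩)}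

/-- An `n`-braid in the path instance `I`: solutions `s 0, …, s n` and indices
`1 ≤ idx 1 < … < idx n ≤ I.len` with `s k (idx k) = s (k+1) (idx k)` and
`s (k-1) (idx (k+1)) = s k (idx (k+1))` for `k = 1, …, n-1`. -/
def IsBraid {A : Type} (I : PathInstance A) (n : ℕ) (s : ℕ → ℕ → A) (idx : ℕ → ℕ) : Prop :=
  (∀ k ≤ n, IsSolution I (s k)) ∧
  1 ≤ idx 1 ∧ idx n ≤ I.len ∧
  (∀ k, 1 ≤ k → k < n → idx k < idx (k + 1)) ∧
  (∀ k, 1 ≤ k → k + 1 ≤ n →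
    s k (idx k) = s (k + 1) (idx k) ∧ s (k - 1) (idx (k + 1)) = s k (idx (k + 1)))

/-- The binary constraint of `I` with scope `(i, i+1)` is subdirect. -/
def SubdirectAt {A : Type} (I : PathInstance A) (i : ℕ) : Prop :=
  (I.B i).Nonempty ∧ (I.B (i + 1)).Nonempty ∧
  (∀ a ∈ I.B i, ∃ b ∈ I.B (i + 1), (a, b) ∈ I.E i) ∧
  (∀ b ∈ I.B (i + 1), ∃ a ∈ I.B i, (a, b) ∈ I.E i)

/-- The subinstance of `I` induced by `[a, b]` is subdirect. -/
def SubdirectOn {A : Type} (I : PathInstance A) (a b : ℕ) : Prop :=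
  ∀ i, a ≤ i → i + 1 ≤ b → SubdirectAt I i

def Subdirect {A : Type} (I : PathInstance A) : Prop := SubdirectOn I 1 I.len

/-- The sets `C_i`: `C 1 = B 1` and
`C (i+1) = {b ∈ B (i+1) | ∃ c ∈ C i, (c, b) ∈ E i}`. -/
def reachSet {A : Type} (I : PathInstance A) : ℕ → Set A
  | 0 => ∅
  | 1 => I.B 1
  | (i + 2) => {b ∈ I.B (i + 2) | ∃ c ∈ reachSet I (i + 1), (c, b) ∈ I.E (i + 1)}

/-- `B_{i,i+1}` contains a backward edge: an edge `(b, c) ∈ E i` with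
`b ∈ B i \ C i` and `c ∈ C (i+1)`. -/
def BackwardAt {A : Type} (I : PathInstance A) (i : ℕ) : Prop :=
  1 ≤ i ∧ i + 1 ≤ I.len ∧
  ∃ b c, (b, c) ∈ I.E i ∧ b ∈ I.B i ∧ b ∉ reachSet I i ∧ c ∈ reachSet I (i + 1)

/-- Adjacency in the graph `Conn(I_{[lo,hi]})`: its vertices are pairs `(i, a)`
with `a ∈ B i`, `lo ≤ i ≤ hi`, and `(i, a)` is adjacent to `(i+1, b)` whenever
`(a, b) ∈ E i`. -/
def connAdj {A : Type} (I : PathInstance A) (lo hi : ℕ) (p q : ℕ × A) : Prop :=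
  lo ≤ p.1 ∧ p.1 + 1 ≤ hi ∧ q.1 = p.1 + 1 ∧
  p.2 ∈ I.B p.1 ∧ q.2 ∈ I.B q.1 ∧ (p.2, q.2) ∈ I.E p.1

/-- `λ_{I,lo,hi}`: the pairs `(a, b) ∈ B lo × B hi` joined by an undirected path
in `Conn(I_{[lo,hi]})`. -/
def lamRel {A : Type} (I : PathInstance A) (lo hi : ℕ) : Set (A × A) :=
  {ab | ab.1 ∈ I.B lo ∧ ab.2 ∈ I.B hi ∧
    Relation.ReflTransGen (fun p q => connAdj I lo hi p q ∨ connAdj I lo hi q p)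
      (lo, ab.1) (hi, ab.2)}

open Classical in
/-- The variable set `U` of the instance `I_λ`: the variables `1`, `len`, and
`i, i+1` for every index `i` such that `B_{i,i+1}` has a backward edge. -/
noncomputable def lamVars {A : Type} (I : PathInstance A) : Finset ℕ :=
  (Finset.Icc 1 I.len).filter
    (fun v => v = 1 ∨ v = I.len ∨ BackwardAt I v ∨ (2 ≤ v ∧ BackwardAt I (v - 1)))

/-- The `t`-th smallest element of `U` (`1`-indexed). -/
noncomputable def lamEnum {A : Type} (I : PathInstance A) (t : ℕ) : ℕ :=
  ((lamVars I).sort (· ≤ ·)).getD (t - 1) 0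

/-- The instance `I_λ`, presented as a path instance whose `t`-th variable is
the `t`-th smallest element of `U`: it consists of the subinstance of `I`
induced by `U`, where each gap between consecutive elements `u < w` of `U` with
`w > u + 1` is filled by the binary constraint `λ_{I,u,w}`. -/
noncomputable def lamInst {A : Type} (I : PathInstance A) : PathInstance A where
  len := (lamVars I).card
  B := fun t => I.B (lamEnum I t)
  E := fun t =>
    if lamEnum I (t + 1) = lamEnum I t + 1 then I.E (lamEnum I t)
    else lamRel I (lamEnum I t) (lamEnum I (t + 1))

/-- Unpacking an `m`-tuple of elements of `V^k` into an `m*k`-tuple of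
elements of `V`. -/
def unpackTuple {X : Type} {m k : ℕ} (σ : Fin m → Fin k → X) : Fin (m * k) → X :=
  fun t => σ t.divNat t.modNat

/-- Unpacking an `m`-ary relation on `A^k` into an `m*k`-ary relation on `A`. -/
def unpackRel {A : Type} {m k : ℕ} (U : Set (Fin m → Fin k → A)) :
    Set (Fin (m * k) → A) :=
  {t | ∃ u ∈ U, ∀ i : Fin (m * k), t i = u i.divNat i.modNat}

/-- The instance `I` has pathwidth at most `p`. -/
def PathwidthLE {A V : Type} (I : Instance A V) (p : ℕ) : Prop :=
  ∃ (m : ℕ) (U : Fin m → Set V),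
    (∀ v : V, ∃ i, v ∈ U i) ∧
    (∀ i, (U i).Finite ∧ (U i).ncard ≤ p + 1) ∧
    (∀ i j q : Fin m, i ≤ q → q ≤ j → ∀ v, v ∈ U i → v ∈ U j → v ∈ U q) ∧
    (∀ c ∈ I.constraints, ∃ i, Set.range c.2.1 ⊆ U i)

/-- `𝔸` has pathwidth duality `p`: for every unsatisfiable instance `I` of
`CSP(𝔸)` there is an unsatisfiable instance `J` of `CSP(𝔸)` of pathwidth at
most `p` such that identifying some variables of `J` (along `h`) yields a
subinstance of `I`. -/
def HasPathwidthDuality {A : Type} (𝔸 : RelStruct A) (p : ℕ) : Prop :=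
  ∀ (V : Type) (I : Instance A V), IsCSPInstance 𝔸 I → ¬I.Satisfiable →
    ∃ (W : Type) (J : Instance A W) (h : W → V),
      IsCSPInstance 𝔸 J ∧ ¬J.Satisfiable ∧ PathwidthLE J p ∧
      ∀ c ∈ J.constraints,
        (⟨c.1, fun i => h (c.2.1 i), c.2.2⟩ :
          Σ n : ℕ, (Fin n → V) × Set (Fin n → A)) ∈ I.constraints

/-- The `k`-th bubble power `𝔸^(k)` of `𝔸`: the relational structure on `A^k`
whose basic relations are all unary relations definable as conjunctions of
basic relations of `𝔸` (with identification of variables and dummy variables,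
but no existential quantification), and all binary relations
`E_ℐ = {(a, b) | ∀ (i,j) ∈ ℐ, a i = b j}` for `ℐ ⊆ [k]²`. -/
def bubblePower {A : Type} (𝔸 : RelStruct A) (k : ℕ) : RelStruct (Fin k → A) where
  basic :=
    {r | (∃ L : Set (Σ n : ℕ, (Fin n → Fin k) × Set (Fin n → A)),
            (∀ c ∈ L, (⟨c.1, c.2.2⟩ : Σ n : ℕ, Set (Fin n → A)) ∈ 𝔸.basic) ∧
            r = ⟨1, {f : Fin 1 → (Fin k → A) |
                      ∀ c ∈ L, (fun i => f 0 (c.2.1 i)) ∈ c.2.2}⟩) ∨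
         (∃ Idx : Set (Fin k × Fin k),
            r = ⟨2, {f : Fin 2 → (Fin k → A) | ∀ q ∈ Idx, f 0 q.1 = f 1 q.2}⟩)}




section RamseyPart

variable {κ : Type}

/-- `H` is homogeneous of uniformity `r` for colouring `col`, with colour `c`. -/
def RHomog (col : Finset ℕ → κ) (r : ℕ) (H : Finset ℕ) (c : κ) : Prop :=
  ∀ T ⊆ H, T.card = r → col T = c

theorem my_ramsey [Fintype κ] [DecidableEq κ] :
    ∀ r k : ℕ, ∃ R : ℕ, ∀ (col : Finset ℕ → κ) (S : Finset ℕ), R ≤ S.card →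
      ∃ H c, H ⊆ S ∧ k ≤ H.card ∧ RHomog col r H c := by
  intro r
  induction r with
  | zero =>
    intro k
    refine ⟨k, fun col S hS => ⟨S, col ∅, subset_rfl, hS, ?_⟩⟩
    intro T _ hT
    rw [Finset.card_eq_zero.mp hT]
  | succ r ih =>
    have inner : ∀ q : ℕ, ∃ R : ℕ, ∀ (col : Finset ℕ → κ) (S : Finset ℕ), R ≤ S.card →
        ∃ (xs : Finset ℕ) (tag : ℕ → κ), xs ⊆ S ∧ q ≤ xs.card ∧
          ∀ x ∈ xs, ∀ T ⊆ xs, T.card = r → (∀ y ∈ T, x < y) → col (insert x T) = tag x := by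
      intro q
      induction q with
      | zero =>
        exact ⟨0, fun col S _ =>
          ⟨∅, fun _ => col ∅, Finset.empty_subset _, Nat.zero_le _, by simp⟩⟩
      | succ q ihq =>
        obtain ⟨Rq, hRq⟩ := ihq
        obtain ⟨Rr, hRr⟩ := ih Rq
        refine ⟨Rr + 1, fun col S hS => ?_⟩
        have hSne : S.Nonempty := Finset.card_pos.mp (by omega)
        obtain ⟨x, hxS, hxmin⟩ : ∃ x ∈ S, ∀ y ∈ S, x ≤ y :=
          ⟨S.min' hSne, S.min'_mem hSne, fun y hy => S.min'_le y hy⟩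
        have hS' : Rr ≤ (S.erase x).card := by
          rw [Finset.card_erase_of_mem hxS]; omega
        obtain ⟨H', c, hH'S, hH'c, hH'h⟩ := hRr (fun T => col (insert x T)) (S.erase x) hS'
        obtain ⟨xs, tag, hxsS, hxsc, hxsp⟩ := hRq col H' hH'c
        have hxnot : x ∉ xs := fun h => Finset.notMem_erase x S (hH'S (hxsS h))
        have hxlt : ∀ y ∈ xs, x < y := by
          intro y hy
          have h1 := hH'S (hxsS hy)
          exact lt_of_le_of_ne (hxmin y (Finset.mem_of_mem_erase h1))
            (Ne.symm (Finset.ne_of_mem_erase h1))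
        refine ⟨insert x xs, fun z => if z = x then c else tag z, ?_, ?_, ?_⟩
        · intro z hz
          rcases Finset.mem_insert.mp hz with h | h
          · exact h ▸ hxS
          · exact Finset.mem_of_mem_erase (hH'S (hxsS h))
        · rw [Finset.card_insert_of_notMem hxnot]; omega
        · intro z hz T hT hTc hTgt
          have hxT : x ∉ T := by
            intro hmem
            have hlt := hTgt x hmem
            rcases Finset.mem_insert.mp hz with h | h
            · exact absurd (h ▸ hlt) (lt_irrefl x)
            · exact absurd (lt_trans (hxlt z h) hlt) (lt_irrefl x)
          have hTxs : T ⊆ xs := by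
            intro y hy
            rcases Finset.mem_insert.mp (hT hy) with h | h
            · exact absurd (h ▸ hy) hxT
            · exact h
          rcases Finset.mem_insert.mp hz with h | h
          · subst h
            simp only [if_pos rfl]
            exact hH'h T (hTxs.trans hxsS) hTc
          · have hzx : z ≠ x := fun e => hxnot (e ▸ h)
            simp only [if_neg hzx]
            exact hxsp z h T hTxs hTc hTgt
    intro k
    obtain ⟨R, hR⟩ := inner (Fintype.card κ * k + 1)
    refine ⟨R, fun col S hS => ?_⟩
    obtain ⟨xs, tag, hsub, hcard, hprop⟩ := hR col S hS
    have hpig : ∃ c ∈ (Finset.univ : Finset κ),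
        k < (xs.filter fun z => tag z = c).card := by
      apply Finset.exists_lt_card_fiber_of_mul_lt_card_of_maps_to
        (fun z _ => Finset.mem_univ (tag z))
      calc Finset.univ.card * k < Fintype.card κ * k + 1 := by
            rw [Finset.card_univ]; omega
        _ ≤ xs.card := hcard
    obtain ⟨c, _, hc⟩ := hpig
    refine ⟨xs.filter (fun z => tag z = c), c, (Finset.filter_subset _ _).trans hsub,
      by omega, ?_⟩
    intro T hT hTc
    have hTne : T.Nonempty := Finset.card_pos.mp (by omega)
    obtain ⟨z, hzT, hzmin⟩ : ∃ z ∈ T, ∀ y ∈ T, z ≤ y :=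
      ⟨T.min' hTne, T.min'_mem hTne, fun y hy => T.min'_le y hy⟩
    have hzf := hT hzT
    have hzxs : z ∈ xs := Finset.mem_of_mem_filter z hzf
    have htagz : tag z = c := (Finset.mem_filter.mp hzf).2
    have herase : T.erase z ⊆ xs := fun y hy =>
      Finset.mem_of_mem_filter y (hT (Finset.mem_of_mem_erase hy))
    have hgt : ∀ y ∈ T.erase z, z < y := fun y hy =>
      lt_of_le_of_ne (hzmin y (Finset.mem_of_mem_erase hy)) (Ne.symm (Finset.ne_of_mem_erase hy))
    have hcard' : (T.erase z).card = r := by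
      rw [Finset.card_erase_of_mem hzT, hTc]; omega
    have hkey := hprop z hzxs (T.erase z) herase hcard' hgt
    rw [Finset.insert_erase hzT] at hkey
    rw [hkey, htagz]

end RamseyPart



variable {A : Type}

def fwdIter (F : ℕ → A → A) (s : ℕ) (y : A) : ℕ → A
  | 0 => y
  | q + 1 => F (s + q) (fwdIter F s y q)

def fwdP (F : ℕ → A → A) (j : ℕ) (y : A) (pos : ℕ) : A :=
  fwdIter F (j + 1) y (pos - (j + 1))

lemma fwdP_start (F : ℕ → A → A) (j : ℕ) (y : A) : fwdP F j y (j + 1) = y := by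
  simp [fwdP, fwdIter]

lemma fwdP_succ (F : ℕ → A → A) {j pos : ℕ} (y : A) (h : j + 1 ≤ pos) :
    fwdP F j y (pos + 1) = F pos (fwdP F j y pos) := by
  unfold fwdP
  have h1 : pos + 1 - (j + 1) = (pos - (j + 1)) + 1 := by omega
  rw [h1]
  simp only [fwdIter]
  have h2 : (j + 1) + (pos - (j + 1)) = pos := by omega
  rw [h2]

lemma fwdP_agree (F : ℕ → A → A) {j j' p : ℕ} (y y' : A)
    (hp : j + 1 ≤ p) (hp' : j' + 1 ≤ p)
    (h : fwdP F j y p = fwdP F j' y' p) :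
    ∀ q, fwdP F j y (p + q) = fwdP F j' y' (p + q) := by
  intro q
  induction q with
  | zero => simpa using h
  | succ q ih =>
    have e1 : p + (q + 1) = (p + q) + 1 := rfl
    rw [e1, fwdP_succ F y (by omega), fwdP_succ F y' (by omega), ih]

lemma fwdP_mem {I : PathInstance A} {aa bb : ℕ} {F : ℕ → A → A}
    (hF : ∀ i x, aa ≤ i → i + 1 ≤ bb → x ∈ I.B i → F i x ∈ I.B (i + 1) ∧ (x, F i x) ∈ I.E i)
    {j : ℕ} {y : A} (hj : aa ≤ j + 1) (hy : y ∈ I.B (j + 1)) :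
    ∀ pos, j + 1 ≤ pos → pos ≤ bb → fwdP F j y pos ∈ I.B pos := by
  have key : ∀ q, ∀ pos, pos = j + 1 + q → pos ≤ bb → fwdP F j y pos ∈ I.B pos := by
    intro q
    induction q with
    | zero =>
      intro pos hpos _
      subst hpos
      simpa [fwdP_start] using hy
    | succ q ih =>
      intro pos hpos hle
      subst hpos
      have e : j + 1 + (q + 1) = (j + 1 + q) + 1 := rfl
      rw [e, fwdP_succ F y (by omega)]
      exact (hF _ _ (by omega) (by omega) (ih _ rfl (by omega))).1
  intro pos h1 h2
  exact key (pos - (j + 1)) pos (by omega) h2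

lemma fwdP_edge {I : PathInstance A} {aa bb : ℕ} {F : ℕ → A → A}
    (hF : ∀ i x, aa ≤ i → i + 1 ≤ bb → x ∈ I.B i → F i x ∈ I.B (i + 1) ∧ (x, F i x) ∈ I.E i)
    {j : ℕ} {y : A} (hj : aa ≤ j + 1) (hy : y ∈ I.B (j + 1)) :
    ∀ pos, j + 1 ≤ pos → pos + 1 ≤ bb →
      (fwdP F j y pos, fwdP F j y (pos + 1)) ∈ I.E pos := by
  intro pos h1 h2
  rw [fwdP_succ F y h1]
  exact (hF pos _ (by omega) h2 (fwdP_mem hF hj hy pos h1 (by omega))).2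

def bwdIter (G : ℕ → A → A) (j : ℕ) (x : A) : ℕ → A
  | 0 => x
  | q + 1 => G (j - (q + 1)) (bwdIter G j x q)

def bwdP (G : ℕ → A → A) (j : ℕ) (x : A) (pos : ℕ) : A :=
  bwdIter G j x (j - pos)

lemma bwdP_start (G : ℕ → A → A) (j : ℕ) (x : A) : bwdP G j x j = x := by
  simp [bwdP, bwdIter]

lemma bwdP_pred (G : ℕ → A → A) {j pos : ℕ} (x : A) (h : pos < j) :
    bwdP G j x pos = G pos (bwdP G j x (pos + 1)) := by
  unfold bwdP
  have h1 : j - pos = (j - (pos + 1)) + 1 := by omega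
  rw [h1]
  simp only [bwdIter]
  have h2 : j - ((j - (pos + 1)) + 1) = pos := by omega
  rw [h2]

lemma bwdP_agree (G : ℕ → A → A) {j j' p : ℕ} (x x' : A)
    (hp : p ≤ j) (hp' : p ≤ j') (h : bwdP G j x p = bwdP G j' x' p) :
    ∀ i, i ≤ p → bwdP G j x i = bwdP G j' x' i := by
  intro i hi
  obtain ⟨q, rfl⟩ : ∃ q, i = p - q := ⟨p - i, by omega⟩
  clear hi
  induction q with
  | zero => simpa using h
  | succ q ih =>
    by_cases hq : p ≤ q
    · have e : p - (q + 1) = p - q := by omega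
      rw [e]; exact ih
    · have h1 : p - (q + 1) < j := by omega
      have h2 : p - (q + 1) < j' := by omega
      have h3 : (p - (q + 1)) + 1 = p - q := by omega
      rw [bwdP_pred G x h1, bwdP_pred G x' h2, h3, ih]

lemma bwdP_mem {I : PathInstance A} {aa bb : ℕ} {G : ℕ → A → A}
    (hG : ∀ i y, aa ≤ i → i + 1 ≤ bb → y ∈ I.B (i + 1) → G i y ∈ I.B i ∧ (G i y, y) ∈ I.E i)
    {j : ℕ} {x : A} (hjb : j ≤ bb) (hx : x ∈ I.B j) :
    ∀ pos, aa ≤ pos → pos ≤ j → bwdP G j x pos ∈ I.B pos := by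
  have key : ∀ q, aa ≤ j - q → bwdP G j x (j - q) ∈ I.B (j - q) := by
    intro q
    induction q with
    | zero => intro _; simpa [bwdP_start] using hx
    | succ q ih =>
      intro hq
      by_cases hq2 : j ≤ q
      · have e : j - (q + 1) = j - q := by omega
        rw [e]; exact ih (by omega)
      · have h1 : j - (q + 1) < j := by omega
        rw [bwdP_pred G x h1]
        have h3 : (j - (q + 1)) + 1 = j - q := by omega
        have hmem := ih (by omega)
        rw [← h3] at hmem
        exact (hG _ _ (by omega) (by omega) hmem).1
  intro pos h1 h2
  have e : pos = j - (j - pos) := by omega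
  rw [e]
  exact key (j - pos) (by omega)

lemma bwdP_edge {I : PathInstance A} {aa bb : ℕ} {G : ℕ → A → A}
    (hG : ∀ i y, aa ≤ i → i + 1 ≤ bb → y ∈ I.B (i + 1) → G i y ∈ I.B i ∧ (G i y, y) ∈ I.E i)
    {j : ℕ} {x : A} (hjb : j ≤ bb) (hx : x ∈ I.B j) :
    ∀ pos, aa ≤ pos → pos + 1 ≤ j →
      (bwdP G j x pos, bwdP G j x (pos + 1)) ∈ I.E pos := by
  intro pos h1 h2
  rw [bwdP_pred G x (by omega)]
  exact (hG pos _ h1 (by omega) (bwdP_mem hG hjb hx (pos + 1) (by omega) h2)).2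

lemma reach_sub {I : PathInstance A} : ∀ i, reachSet I i ⊆ I.B i
  | 0 => by intro y hy; exact absurd hy (by simp [reachSet])
  | 1 => by intro y hy; exact hy
  | (i + 2) => fun y hy => hy.1

lemma reach_succ {I : PathInstance A} {i : ℕ} (hi : 1 ≤ i) {x y : A}
    (hx : x ∈ reachSet I i) (hy : y ∈ I.B (i + 1)) (hxy : (x, y) ∈ I.E i) :
    y ∈ reachSet I (i + 1) := by
  obtain ⟨k, rfl⟩ : ∃ k, i = k + 1 := ⟨i - 1, by omega⟩
  exact ⟨hy, x, hx, hxy⟩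

lemma reach_pred {I : PathInstance A} {i : ℕ} (hi : 1 ≤ i) {y : A}
    (hy : y ∈ reachSet I (i + 1)) : ∃ x ∈ reachSet I i, (x, y) ∈ I.E i := by
  obtain ⟨k, rfl⟩ : ∃ k, i = k + 1 := ⟨i - 1, by omega⟩
  exact hy.2

lemma exists_cpull {I : PathInstance A} {lo : ℕ} (hlo : 1 ≤ lo) :
    ∀ pos, lo ≤ pos → ∀ y ∈ reachSet I pos,
      ∃ g : ℕ → A, g pos = y ∧ (∀ i, lo ≤ i → i ≤ pos → g i ∈ reachSet I i) ∧
        ∀ i, lo ≤ i → i + 1 ≤ pos → (g i, g (i + 1)) ∈ I.E i := by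
  intro pos hpos
  induction pos, hpos using Nat.le_induction with
  | base =>
    intro y hy
    refine ⟨fun _ => y, rfl, ?_, ?_⟩
    · intro i h1 h2
      have : i = lo := le_antisymm h2 h1
      subst this; exact hy
    · intro i h1 h2; omega
  | succ pos hpos ih =>
    intro y hy
    obtain ⟨x, hx, hxy⟩ := reach_pred (by omega) hy
    obtain ⟨g, hg1, hg2, hg3⟩ := ih x hx
    refine ⟨fun i => if i = pos + 1 then y else g i, by simp, ?_, ?_⟩
    · intro i h1 h2
      by_cases h : i = pos + 1
      · subst h; simpa using hy
      · have hle : i ≤ pos := by omega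
        simpa [h] using hg2 i h1 hle
    · intro i h1 h2
      by_cases h : i + 1 = pos + 1
      · have hip : i = pos := by omega
        subst hip
        have e1 : (if i = i + 1 then y else g i) = g i := by
          simp
        have e2 : (if i + 1 = i + 1 then y else g (i + 1)) = y := by simp
        show (if i = i + 1 then y else g i, if i + 1 = i + 1 then y else g (i + 1)) ∈ I.E i
        rw [e1, e2, hg1]
        exact hxy
      · have hle : i + 1 ≤ pos := by omega
        have e1 : (if i = pos + 1 then y else g i) = g i := by
          have : i ≠ pos + 1 := by omega
          simp [this]
        have e2 : (if i + 1 = pos + 1 then y else g (i + 1)) = g (i + 1) := by simp [show i ≠ pos by omega]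
        show (if i = pos + 1 then y else g i, if i + 1 = pos + 1 then y else g (i + 1)) ∈ I.E i
        rw [e1, e2]
        exact hg3 i h1 hle


section GluePart

variable {A : Type}

lemma glue_false (I : PathInstance A) (n : ℕ) (p : ℕ → A → A → A → A)
    (hp0 : ∀ x y z : A, p 0 x y z = x) (hpn : ∀ x y z : A, p n x y z = z)
    (hpk : ∀ k < n, ∀ x y : A, p k x x y = p (k + 1) x y y)
    (hPB : ∀ k ≤ n, ∀ i, 1 ≤ i → i ≤ I.len → Pres3Set (p k) (I.B i))
    (hPE : ∀ k ≤ n, ∀ i, 1 ≤ i → i + 1 ≤ I.len → Pres3Rel (p k) (I.E i))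
    (a q : ℕ) (ha : 1 ≤ a) (haq : a ≤ q) (hqlen : q ≤ I.len)
    (s : ℕ → ℕ → A) (idx : ℕ → ℕ)
    (hsol : ∀ t ≤ n, IsSolutionOn I a q (s t))
    (hidx1 : idx 1 = a) (hidxn : idx n ≤ q)
    (hmono : ∀ u v, 1 ≤ u → u ≤ v → v ≤ n → idx u ≤ idx v)
    (hmeet1 : ∀ t, 1 ≤ t → t ≤ n → s (t - 2) (idx t) = s (t - 1) (idx t))
    (hmeet2 : ∀ t, 1 ≤ t → t ≤ n → s t (idx t) = s (min (t + 1) n) (idx t))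
    (hstart : s 0 a ∈ reachSet I a)
    (hend : s n q ∉ reachSet I q) : False := by
  classical
  set W : ℕ → ℕ → A := fun t i => p t (s (t - 1) i) (s t i) (s (min (t + 1) n) i) with hW
  have hW0 : ∀ i, W 0 i = s 0 i := by
    intro i
    show p 0 _ _ _ = _
    rw [hp0]
  have hWn : ∀ i, W n i = s n i := by
    intro i
    show p n _ _ _ = _
    rw [hpn, min_eq_right (Nat.le_succ n)]
  have hWsol : ∀ t ≤ n, IsSolutionOn I a q (W t) := by
    intro t ht
    obtain ⟨hm1, he1⟩ := hsol (t - 1) (by omega)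
    obtain ⟨hm2, he2⟩ := hsol t ht
    obtain ⟨hm3, he3⟩ := hsol (min (t + 1) n) (by omega)
    constructor
    · intro i h1 h2
      exact hPB t ht i (by omega) (by omega) _ _ _ (hm1 i h1 h2) (hm2 i h1 h2) (hm3 i h1 h2)
    · intro i h1 h2
      exact hPE t ht i (by omega) (by omega) _ _ _ (he1 i h1 h2) (he2 i h1 h2) (he3 i h1 h2)
  have hbdry : ∀ t, 1 ≤ t → t ≤ n → W (t - 1) (idx t) = W t (idx t) := by
    intro t h1 h2
    have e1 : t - 1 - 1 = t - 2 := by omega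
    have e2 : min (t - 1 + 1) n = t := by omega
    show p (t - 1) (s (t - 1 - 1) (idx t)) (s (t - 1) (idx t)) (s (min (t - 1 + 1) n) (idx t))
        = p t (s (t - 1) (idx t)) (s t (idx t)) (s (min (t + 1) n) (idx t))
    rw [e1, e2, ← hmeet1 t h1 h2, ← hmeet2 t h1 h2]
    rw [hmeet1 t h1 h2]
    have e4 : t - 1 + 1 = t := by omega
    rw [← e4]
    exact hpk (t - 1) (by omega) _ _
  set T : ℕ → ℕ := fun i => ((Finset.Icc 1 n).filter (fun t => idx t ≤ i)).card with hT
  have hTle : ∀ i, T i ≤ n := by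
    intro i
    show ((Finset.Icc 1 n).filter (fun t => idx t ≤ i)).card ≤ n
    calc ((Finset.Icc 1 n).filter (fun t => idx t ≤ i)).card
        ≤ (Finset.Icc 1 n).card := Finset.card_filter_le _ _
      _ = n := by rw [Nat.card_Icc]; omega
  have hTge : ∀ i t, 1 ≤ t → t ≤ n → idx t ≤ i → t ≤ T i := by
    intro i t h1 h2 h3
    have hsubs : Finset.Icc 1 t ⊆ (Finset.Icc 1 n).filter (fun u => idx u ≤ i) := by
      intro u hu
      rw [Finset.mem_Icc] at hu
      rw [Finset.mem_filter, Finset.mem_Icc]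
      exact ⟨⟨hu.1, by omega⟩, le_trans (hmono u t hu.1 hu.2 h2) h3⟩
    calc t = (Finset.Icc 1 t).card := by rw [Nat.card_Icc]; omega
      _ ≤ _ := Finset.card_le_card hsubs
  have hTidx : ∀ i, 1 ≤ T i → idx (T i) ≤ i := by
    intro i hTi
    by_contra hcon
    push_neg at hcon
    have hsubs : (Finset.Icc 1 n).filter (fun u => idx u ≤ i) ⊆ Finset.Icc 1 (T i - 1) := by
      intro u hu
      rw [Finset.mem_filter, Finset.mem_Icc] at hu
      rw [Finset.mem_Icc]
      refine ⟨hu.1.1, ?_⟩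
      by_contra hu2
      push_neg at hu2
      have hiu : idx (T i) ≤ idx u := hmono (T i) u hTi (by omega) hu.1.2
      omega
    have hcc := Finset.card_le_card hsubs
    rw [Nat.card_Icc] at hcc
    have hTi2 : T i = ((Finset.Icc 1 n).filter (fun u => idx u ≤ i)).card := rfl
    omega
  have hchain : ∀ z u v, u ≤ v → v ≤ n → (∀ t, u < t → t ≤ v → idx t = z) → W u z = W v z := by
    intro z u v huv
    induction v, huv using Nat.le_induction with
    | base => intro _ _; rfl
    | succ v huv ih =>
      intro hv hbet
      have h1 : W u z = W v z := ih (by omega) (fun t ht1 ht2 => hbet t ht1 (by omega))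
      have h2 := hbdry (v + 1) (by omega) hv
      have e : v + 1 - 1 = v := by omega
      rw [e, hbet (v + 1) (by omega) le_rfl] at h2
      rw [h1, h2]
  set w : ℕ → A := fun i => W (T i) i with hw
  have hTmono : ∀ i, T i ≤ T (i + 1) := by
    intro i
    apply Finset.card_le_card
    intro u hu
    rw [Finset.mem_filter] at hu ⊢
    exact ⟨hu.1, by omega⟩
  have hwedge : ∀ i, a ≤ i → i + 1 ≤ q → (w i, w (i + 1)) ∈ I.E i := by
    intro i h1 h2
    have huv := hTmono i
    have heq : W (T (i + 1)) (i + 1) = W (T i) (i + 1) := by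
      symm
      apply hchain (i + 1) (T i) (T (i + 1)) huv (hTle _)
      intro t ht1 ht2
      have htn : t ≤ n := le_trans ht2 (hTle _)
      have hge : ¬ idx t ≤ i := fun hcon => absurd (hTge i t (by omega) htn hcon) (by omega)
      have hle : idx t ≤ i + 1 :=
        le_trans (hmono t (T (i + 1)) (by omega) ht2 (hTle _)) (hTidx (i + 1) (by omega))
      omega
    show (W (T i) i, W (T (i + 1)) (i + 1)) ∈ I.E i
    rw [heq]
    exact (hWsol (T i) (hTle _)).2 i h1 h2
  have hwa : w a ∈ reachSet I a := by
    have heq : W 0 a = W (T a) a := by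
      apply hchain a 0 (T a) (Nat.zero_le _) (hTle _)
      intro t ht1 ht2
      have hl1 : idx t ≤ a :=
        le_trans (hmono t (T a) (by omega) ht2 (hTle _)) (hTidx a (by omega))
      have hl2 : a ≤ idx t := by
        rw [← hidx1]
        exact hmono 1 t le_rfl (by omega) (le_trans ht2 (hTle _))
      omega
    show W (T a) a ∈ _
    rw [← heq, hW0]
    exact hstart
  have hwmem : ∀ i, a ≤ i → i ≤ q → w i ∈ I.B i := fun i h1 h2 =>
    (hWsol (T i) (hTle _)).1 i h1 h2
  have hwreach : ∀ i, a ≤ i → i ≤ q → w i ∈ reachSet I i := by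
    intro i hi
    induction i, hi using Nat.le_induction with
    | base => intro _; exact hwa
    | succ i hi ih =>
      intro h2
      exact reach_succ (by omega) (ih (by omega)) (hwmem (i + 1) (by omega) h2)
        (hwedge i hi (by omega))
  have hTq : T q = n := by
    rcases Nat.eq_zero_or_pos n with h | h
    · have := hTle q; omega
    · exact le_antisymm (hTle q) (hTge q n h le_rfl hidxn)
  have hfin : w q = s n q := by
    show W (T q) q = _
    rw [hTq]
    exact hWn q
  exact hend (hfin ▸ hwreach q haq le_rfl)

end GluePart


section MainHelpers

lemma inj_bound {A : Type} [Finite A] {S : Set A} {N M : ℕ} (hS : S.ncard ≤ N)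
    (f : Fin M → A) (hf : ∀ i, f i ∈ S) (hinj : Function.Injective f) (hM : N < M) : False := by
  have h1 : Nat.card (Fin M) ≤ Nat.card S :=
    Nat.card_le_card_of_injective (fun i => (⟨f i, hf i⟩ : S))
      (fun i j h => hinj (congrArg Subtype.val h))
  rw [Nat.card_eq_fintype_card, Fintype.card_fin, Nat.card_coe_set_eq] at h1
  omega

lemma card_quad {q1 q2 q3 q4 : ℕ} (h1 : q1 < q2) (h2 : q2 < q3) (h3 : q3 < q4) :
    ({q1, q2, q3, q4} : Finset ℕ).card = 4 := by
  rw [Finset.card_insert_of_notMem (by simp; omega),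
      Finset.card_insert_of_notMem (by simp; omega),
      Finset.card_insert_of_notMem (by simp; omega), Finset.card_singleton]

lemma sort_quad {q1 q2 q3 q4 : ℕ} (h1 : q1 < q2) (h2 : q2 < q3) (h3 : q3 < q4) :
    ({q1, q2, q3, q4} : Finset ℕ).sort (· ≤ ·) = [q1, q2, q3, q4] := by
  apply (fun hp h1 h2 => List.Perm.eq_of_pairwise' (r := (· ≤ · : ℕ → ℕ → Prop)) h1 h2 hp)
  · apply List.perm_of_nodup_nodup_toFinset_eq (Finset.sort_nodup _ _)
    · simp only [List.nodup_cons, List.mem_cons, List.mem_singleton, List.not_mem_nil,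
        List.nodup_nil, not_or, and_true, not_false_iff]
      omega
    · rw [Finset.sort_toFinset]
      simp only [List.toFinset_cons, List.toFinset_nil, LawfulSingleton.insert_empty_eq]
  · exact Finset.pairwise_sort _ _
  · simp only [List.pairwise_cons, List.mem_cons, List.mem_singleton, List.not_mem_nil,
      List.Pairwise.nil, or_false, false_implies, implies_true, and_true]
    constructor
    · intro x hx
      rcases hx with rfl | rfl | rfl <;> omega
    constructor
    · intro x hx
      rcases hx with rfl | rfl <;> omega
    · intro x hx
      rcases hx with rfl <;> omega

end MainHelpers

/-- many backward edges destroy subdirectness.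
For every `n` and `N` there is an `m` such that: if `I` is a path instance over
a finite set, `1 < a < b < len`, each `B_i` has at most `N` elements, all
constraint relations are invariant under a chain of `n` Hagemann–Mitschke
terms, and at least `m` indices `j ∈ [a, b)` are such that `B_{j,j+1}` contains
a backward edge, then `I_{[a,b]}` is not subdirect. -/
theorem statement8 (n N : ℕ) :
    ∃ m : ℕ, ∀ (A : Type), Finite A → ∀ (I : PathInstance A) (a b : ℕ),
      1 < a → a < b → b < I.len →
      (∀ i, 1 ≤ i → i ≤ I.len → (I.B i).ncard ≤ N) →
      (∃ p : ℕ → A → A → A → A, IsHMChain n p ∧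
        (∀ k ≤ n, ∀ i, 1 ≤ i → i ≤ I.len → Pres3Set (p k) (I.B i)) ∧
        (∀ k ≤ n, ∀ i, 1 ≤ i → i + 1 ≤ I.len → Pres3Rel (p k) (I.E i))) →
      m ≤ {j | a ≤ j ∧ j < b ∧ BackwardAt I j}.ncard →
      ¬SubdirectOn I a b := by
  classical
  obtain ⟨R, hR⟩ := my_ramsey (κ := Bool × Bool) 4 (max (n + 3) (N + 3))
  refine ⟨R + 1, ?_⟩
  intro A hfin I a b ha hab hb hN hpp hm hsub
  haveI := hfin
  obtain ⟨p, hHM, hPB, hPE⟩ := hpp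
  obtain ⟨hidem, hp0, hpn, hpk⟩ := hHM
  -- the set of backward indices
  have hJsub : {j | a ≤ j ∧ j < b ∧ BackwardAt I j} ⊆ Set.Ico a b := fun j hj => ⟨hj.1, hj.2.1⟩
  have hJfin : {j | a ≤ j ∧ j < b ∧ BackwardAt I j}.Finite := (Set.finite_Ico a b).subset hJsub
  set Jf := hJfin.toFinset with hJfdef
  have hJcard : R + 1 ≤ Jf.card := by
    rwa [Set.ncard_eq_toFinset_card _ hJfin] at hm
  have hJmem : ∀ j ∈ Jf, a ≤ j ∧ j < b ∧ BackwardAt I j := by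
    intro j hj
    rw [hJfdef, Set.Finite.mem_toFinset] at hj
    exact hj
  have hJne : Jf.Nonempty := Finset.card_pos.mp (by omega)
  obtain ⟨j0, hj0⟩ := hJne
  obtain ⟨hj0a, hj0b, hbw0⟩ := hJmem j0 hj0
  obtain ⟨hbw01, hbw02, x0, y0, hx0e, hx0B, hx0C, hy0C⟩ := hbw0
  -- witness functions for backward edges
  have hwitex : ∀ j : ℕ, ∃ x y : A, BackwardAt I j →
      ((x, y) ∈ I.E j ∧ x ∈ I.B j ∧ x ∉ reachSet I j ∧ y ∈ reachSet I (j + 1)) := by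
    intro j
    by_cases h : BackwardAt I j
    · obtain ⟨-, -, x, y, h1, h2, h3, h4⟩ := h
      exact ⟨x, y, fun _ => ⟨h1, h2, h3, h4⟩⟩
    · exact ⟨x0, x0, fun hh => absurd hh h⟩
  choose xw yw hxyw using hwitex
  -- degenerate case: n ≤ 1 forces A to be a subsingleton
  by_cases hn1 : n < 2
  · have hsing : ∀ u v : A, u = v := by
      intro u v
      interval_cases n
      · exact (hp0 u u v).symm.trans (hpn u u v)
      · have h1 := hpk 0 (by omega) u v
        rw [hp0] at h1
        rw [h1]
        exact hpn u v v
    obtain ⟨c0, hc0, -⟩ := reach_pred (i := j0) (by omega) hy0C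
    exact hx0C (hsing x0 c0 ▸ hc0)
  push_neg at hn1
  -- choice functions from subdirectness
  have hFex : ∀ i (x : A), ∃ y : A, a ≤ i → i + 1 ≤ b → x ∈ I.B i →
      (y ∈ I.B (i + 1) ∧ (x, y) ∈ I.E i) := by
    intro i x
    by_cases h : a ≤ i ∧ i + 1 ≤ b ∧ x ∈ I.B i
    · obtain ⟨y, hy1, hy2⟩ := (hsub i h.1 h.2.1).2.2.1 x h.2.2
      exact ⟨y, fun _ _ _ => ⟨hy1, hy2⟩⟩
    · exact ⟨x0, fun h1 h2 h3 => absurd ⟨h1, h2, h3⟩ h⟩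
  choose F hF using hFex
  have hF' : ∀ i (x : A), a ≤ i → i + 1 ≤ b → x ∈ I.B i →
      F i x ∈ I.B (i + 1) ∧ (x, F i x) ∈ I.E i := fun i x h1 h2 h3 => hF i x h1 h2 h3
  have hGex : ∀ i (y : A), ∃ x : A, a ≤ i → i + 1 ≤ b → y ∈ I.B (i + 1) →
      (x ∈ I.B i ∧ (x, y) ∈ I.E i) := by
    intro i y
    by_cases h : a ≤ i ∧ i + 1 ≤ b ∧ y ∈ I.B (i + 1)
    · obtain ⟨x, hx1, hx2⟩ := (hsub i h.1 h.2.1).2.2.2 y h.2.2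
      exact ⟨x, fun _ _ _ => ⟨hx1, hx2⟩⟩
    · exact ⟨x0, fun h1 h2 h3 => absurd ⟨h1, h2, h3⟩ h⟩
  choose G hG using hGex
  have hG' : ∀ i (y : A), a ≤ i → i + 1 ≤ b → y ∈ I.B (i + 1) →
      G i y ∈ I.B i ∧ (G i y, y) ∈ I.E i := fun i y h1 h2 h3 => hG i y h1 h2 h3
  -- canonical paths
  set sig : ℕ → ℕ → A := fun j pos => fwdP F j (yw j) pos with hsigdef
  set pii : ℕ → ℕ → A := fun j pos => bwdP G j (xw j) pos with hpiidef
  -- first-merge position of two forward paths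
  set nu : ℕ → ℕ → ℕ := fun u v =>
    if h : ((Finset.Icc (v + 1) b).filter (fun pos => sig u pos = sig v pos)).Nonempty
    then ((Finset.Icc (v + 1) b).filter (fun pos => sig u pos = sig v pos)).min' h
    else b + 1 with hnudef
  have hnueq : ∀ u v, nu u v =
      if h : ((Finset.Icc (v + 1) b).filter (fun pos => sig u pos = sig v pos)).Nonempty
      then ((Finset.Icc (v + 1) b).filter (fun pos => sig u pos = sig v pos)).min' h
      else b + 1 := fun u v => rfl
  have hnu_ge : ∀ u v, v < b → v + 1 ≤ nu u v := by
    intro u v hv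
    rw [hnueq]
    split
    · next h =>
      have hmm := Finset.min'_mem _ h
      rw [Finset.mem_filter, Finset.mem_Icc] at hmm
      exact hmm.1.1
    · omega
  have hnu_agree : ∀ u v, nu u v ≤ b → sig u (nu u v) = sig v (nu u v) := by
    intro u v hle
    by_cases h : ((Finset.Icc (v + 1) b).filter (fun pos => sig u pos = sig v pos)).Nonempty
    · rw [hnueq, dif_pos h]
      have hmm := Finset.min'_mem _ h
      rw [Finset.mem_filter] at hmm
      exact hmm.2
    · exfalso
      rw [hnueq, dif_neg h] at hle
      omega
  have hnu_min : ∀ u v pos, v + 1 ≤ pos → pos ≤ b → sig u pos = sig v pos →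
      nu u v ≤ pos := by
    intro u v pos h1 h2 h3
    have hmem : pos ∈ (Finset.Icc (v + 1) b).filter (fun pos => sig u pos = sig v pos) := by
      rw [Finset.mem_filter, Finset.mem_Icc]
      exact ⟨⟨h1, h2⟩, h3⟩
    rw [hnueq, dif_pos ⟨pos, hmem⟩]
    exact Finset.min'_le _ _ hmem
  -- the colouring of 4-element subsets
  set col : Finset ℕ → Bool × Bool := fun Tset =>
    match Tset.sort (· ≤ ·) with
    | [q1, q2, q3, q4] =>
        (decide (nu q1 q2 ≤ q3), decide (pii q3 (nu q1 q2) = pii q4 (nu q1 q2)))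
    | _ => (true, true)
    with hcoldef
  have hcolval : ∀ q1 q2 q3 q4 : ℕ, q1 < q2 → q2 < q3 → q3 < q4 →
      col {q1, q2, q3, q4} =
        (decide (nu q1 q2 ≤ q3), decide (pii q3 (nu q1 q2) = pii q4 (nu q1 q2))) := by
    intro q1 q2 q3 q4 h1 h2 h3
    show (match ({q1, q2, q3, q4} : Finset ℕ).sort (· ≤ ·) with
      | [r1, r2, r3, r4] =>
          (decide (nu r1 r2 ≤ r3), decide (pii r3 (nu r1 r2) = pii r4 (nu r1 r2)))
      | _ => (true, true)) = _
    rw [sort_quad h1 h2 h3]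
  -- extract a homogeneous set
  obtain ⟨H0, cc, hH0sub, hH0card, hH0hom⟩ := hR col Jf (by omega)
  set K := max (n + 3) (N + 3) with hKdef
  have hK3 : n + 3 ≤ K := le_max_left _ _
  have hKN : N + 3 ≤ K := le_max_right _ _
  obtain ⟨H, hHsub, hHcard⟩ := Finset.exists_subset_card_eq hH0card
  have hHhom : ∀ T ⊆ H, T.card = 4 → col T = cc := fun T hT h4 =>
    hH0hom T (hT.trans hHsub) h4
  set ee : Fin K ↪o ℕ := H.orderEmbOfFin hHcard with heedef
  have hemono : ∀ i j : Fin K, i < j → ee i < ee j := fun i j h => ee.lt_iff_lt.mpr h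
  have heJ : ∀ i : Fin K, a ≤ ee i ∧ ee i < b ∧ BackwardAt I (ee i) := fun i =>
    hJmem _ (hH0sub (hHsub (Finset.orderEmbOfFin_mem H hHcard i)))
  have hewit : ∀ i : Fin K, (xw (ee i), yw (ee i)) ∈ I.E (ee i) ∧ xw (ee i) ∈ I.B (ee i) ∧
      xw (ee i) ∉ reachSet I (ee i) ∧ yw (ee i) ∈ reachSet I (ee i + 1) := fun i =>
    hxyw _ (heJ i).2.2
  have hquad : ∀ i1 i2 i3 i4 : Fin K, i1 < i2 → i2 < i3 → i3 < i4 →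
      (decide (nu (ee i1) (ee i2) ≤ ee i3),
       decide (pii (ee i3) (nu (ee i1) (ee i2)) = pii (ee i4) (nu (ee i1) (ee i2)))) = cc := by
    intro i1 i2 i3 i4 h12 h23 h34
    rw [← hcolval _ _ _ _ (hemono _ _ h12) (hemono _ _ h23) (hemono _ _ h34)]
    apply hHhom
    · intro z hz
      simp only [Finset.mem_insert, Finset.mem_singleton] at hz
      rcases hz with rfl | rfl | rfl | rfl <;>
        exact Finset.orderEmbOfFin_mem H hHcard _
    · exact card_quad (hemono _ _ h12) (hemono _ _ h23) (hemono _ _ h34)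
  have hKpos : 0 < K := by omega
  -- a clamped enumeration of the homogeneous set
  set eN : ℕ → ℕ := fun m => ee ⟨min m (K - 1), by omega⟩ with heNdef
  have heNeq : ∀ (m : ℕ), m < K → ∀ (h : m < K), eN m = ee ⟨m, h⟩ := by
    intro m hm h
    show ee ⟨min m (K - 1), _⟩ = ee ⟨m, h⟩
    congr 1
    rw [Fin.mk.injEq]
    omega
  have heNmono : ∀ m m' : ℕ, m < m' → m' < K → eN m < eN m' := by
    intro m m' h1 h2
    rw [heNeq m (by omega) (by omega), heNeq m' h2 h2]
    exact hemono _ _ (by rw [Fin.mk_lt_mk]; omega)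
  have heNmonole : ∀ m m' : ℕ, m ≤ m' → m' < K → eN m ≤ eN m' := by
    intro m m' h1 h2
    rcases Nat.eq_or_lt_of_le h1 with h | h
    · subst h; exact le_rfl
    · exact le_of_lt (heNmono m m' h h2)
  have heNJ : ∀ m : ℕ, a ≤ eN m ∧ eN m < b ∧ BackwardAt I (eN m) := fun m =>
    hJmem _ (hH0sub (hHsub (Finset.orderEmbOfFin_mem H hHcard _)))
  have heNwit : ∀ m : ℕ, (xw (eN m), yw (eN m)) ∈ I.E (eN m) ∧ xw (eN m) ∈ I.B (eN m) ∧
      xw (eN m) ∉ reachSet I (eN m) ∧ yw (eN m) ∈ reachSet I (eN m + 1) := fun m =>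
    hxyw _ (heNJ m).2.2
  have hquadN : ∀ m1 m2 m3 m4 : ℕ, m1 < m2 → m2 < m3 → m3 < m4 → m4 < K →
      (decide (nu (eN m1) (eN m2) ≤ eN m3),
       decide (pii (eN m3) (nu (eN m1) (eN m2)) = pii (eN m4) (nu (eN m1) (eN m2)))) = cc := by
    intro m1 m2 m3 m4 h1 h2 h3 h4
    rw [heNeq m1 (by omega) (by omega), heNeq m2 (by omega) (by omega),
      heNeq m3 (by omega) (by omega), heNeq m4 h4 h4]
    exact hquad _ _ _ _ (by rw [Fin.mk_lt_mk]; omega) (by rw [Fin.mk_lt_mk]; omega)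
      (by rw [Fin.mk_lt_mk]; omega)
  -- force the first colour component
  have hforce1 : cc.1 = true := by
    by_contra hc1
    have hkey : ∀ m1 m2 : ℕ, m1 < m2 → m2 < K - 2 →
        ¬ sig (eN m1) (eN (K - 2)) = sig (eN m2) (eN (K - 2)) := by
      intro m1 m2 h12 h2 heqq
      have hle : nu (eN m1) (eN m2) ≤ eN (K - 2) := by
        apply hnu_min _ _ _ ?_ (le_of_lt (heNJ _).2.1) heqq
        have := heNmono m2 (K - 2) h2 (by omega)
        omega
      have hd : decide (nu (eN m1) (eN m2) ≤ eN (K - 2)) = cc.1 :=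
        congrArg Prod.fst (hquadN m1 m2 (K - 2) (K - 1) h12 h2 (by omega) (by omega))
      rw [decide_eq_true hle] at hd
      exact hc1 hd.symm
    apply inj_bound (S := I.B (eN (K - 2))) (N := N) (M := N + 1)
      (hN _ (by have := (heNJ (K - 2)).1; omega) (by have := (heNJ (K - 2)).2.1; omega))
      (fun i : Fin (N + 1) => sig (eN (i : ℕ)) (eN (K - 2))) ?_ ?_ (by omega)
    · intro i
      apply fwdP_mem hF' (by have := (heNJ (i : ℕ)).1; omega)
        (reach_sub _ (heNwit (i : ℕ)).2.2.2)
      · have := heNmono (i : ℕ) (K - 2) (by omega) (by omega)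
        omega
      · exact le_of_lt (heNJ _).2.1
    · intro i j hij
      rcases lt_trichotomy i j with h | h | h
      · exact absurd hij (hkey (i : ℕ) (j : ℕ) h (by omega))
      · exact h
      · exact absurd hij.symm (hkey (j : ℕ) (i : ℕ) h (by omega))
  -- force the second colour component
  have hforce2 : cc.2 = true := by
    by_contra hc2
    have hP0le : nu (eN 0) (eN 1) ≤ eN 2 := by
      have hd : decide (nu (eN 0) (eN 1) ≤ eN 2) = cc.1 :=
        congrArg Prod.fst (hquadN 0 1 2 3 (by omega) (by omega) (by omega) (by omega))
      rw [hforce1] at hd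
      exact of_decide_eq_true hd
    have hP0ge : eN 1 + 1 ≤ nu (eN 0) (eN 1) := hnu_ge _ _ (heNJ 1).2.1
    have hkey2 : ∀ m1 m2 : ℕ, 2 ≤ m1 → m1 < m2 → m2 < K →
        ¬ pii (eN m1) (nu (eN 0) (eN 1)) = pii (eN m2) (nu (eN 0) (eN 1)) := by
      intro m1 m2 h2 h12 hK2 heqq
      have hd : decide (pii (eN m1) (nu (eN 0) (eN 1)) = pii (eN m2) (nu (eN 0) (eN 1)))
          = cc.2 :=
        congrArg Prod.snd (hquadN 0 1 m1 m2 (by omega) (by omega) h12 hK2)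
      rw [decide_eq_true heqq] at hd
      exact hc2 hd.symm
    have h1a : a ≤ eN 1 := (heNJ 1).1
    apply inj_bound (S := I.B (nu (eN 0) (eN 1))) (N := N) (M := N + 1)
      (hN _ (by omega) (by have := (heNJ 2).2.1; omega))
      (fun i : Fin (N + 1) => pii (eN ((i : ℕ) + 2)) (nu (eN 0) (eN 1))) ?_ ?_ (by omega)
    · intro i
      have h22 : eN 2 ≤ eN ((i : ℕ) + 2) := heNmonole 2 _ (by omega) (by omega)
      exact bwdP_mem hG' (le_of_lt (heNJ _).2.1) (heNwit ((i : ℕ) + 2)).2.1 _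
        (by omega) (by omega)
    · intro i j hij
      rcases lt_trichotomy i j with h | h | h
      · exact absurd hij (hkey2 ((i : ℕ) + 2) ((j : ℕ) + 2) (by omega) (by omega) (by omega))
      · exact h
      · exact absurd hij.symm
          (hkey2 ((j : ℕ) + 2) ((i : ℕ) + 2) (by omega) (by omega) (by omega))
  -- the two usable consequences of homogeneity
  have hQ1 : ∀ m1 m2 m3 m4 : ℕ, m1 < m2 → m2 < m3 → m3 < m4 → m4 < K →
      nu (eN m1) (eN m2) ≤ eN m3 := by
    intro m1 m2 m3 m4 h1 h2 h3 h4
    have hd : decide (nu (eN m1) (eN m2) ≤ eN m3) = cc.1 :=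
      congrArg Prod.fst (hquadN m1 m2 m3 m4 h1 h2 h3 h4)
    rw [hforce1] at hd
    exact of_decide_eq_true hd
  have hQ2 : ∀ m1 m2 m3 m4 : ℕ, m1 < m2 → m2 < m3 → m3 < m4 → m4 < K →
      pii (eN m3) (nu (eN m1) (eN m2)) = pii (eN m4) (nu (eN m1) (eN m2)) := by
    intro m1 m2 m3 m4 h1 h2 h3 h4
    have hd : decide (pii (eN m3) (nu (eN m1) (eN m2)) = pii (eN m4) (nu (eN m1) (eN m2)))
        = cc.2 := congrArg Prod.snd (hquadN m1 m2 m3 m4 h1 h2 h3 h4)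
    rw [hforce2] at hd
    exact of_decide_eq_true hd
  -- the chain of backward indices
  set jj : ℕ → ℕ := fun t => eN (t + 1) with hjjdef
  have hjja : ∀ t, a ≤ jj t := fun t => (heNJ (t + 1)).1
  have hjjb : ∀ t, jj t < b := fun t => (heNJ (t + 1)).2.1
  have hjjw : ∀ t, (xw (jj t), yw (jj t)) ∈ I.E (jj t) ∧ xw (jj t) ∈ I.B (jj t) ∧
      xw (jj t) ∉ reachSet I (jj t) ∧ yw (jj t) ∈ reachSet I (jj t + 1) := fun t =>
    heNwit (t + 1)
  have hjjmono : ∀ t u, t < u → u ≤ n + 1 → jj t < jj u := fun t u h1 h2 =>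
    heNmono (t + 1) (u + 1) (by omega) (by omega)
  have hjjmonole : ∀ t u, t ≤ u → u ≤ n + 1 → jj t ≤ jj u := fun t u h1 h2 =>
    heNmonole (t + 1) (u + 1) (by omega) (by omega)
  have hQ1j : ∀ t1 t2 t3 t4 : ℕ, t1 < t2 → t2 < t3 → t3 < t4 → t4 ≤ n + 1 →
      nu (jj t1) (jj t2) ≤ jj t3 := fun t1 t2 t3 t4 h1 h2 h3 h4 =>
    hQ1 (t1 + 1) (t2 + 1) (t3 + 1) (t4 + 1) (by omega) (by omega) (by omega) (by omega)
  have hQ2j : ∀ t1 t2 t3 t4 : ℕ, t1 < t2 → t2 < t3 → t3 < t4 → t4 ≤ n + 1 →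
      pii (jj t3) (nu (jj t1) (jj t2)) = pii (jj t4) (nu (jj t1) (jj t2)) :=
    fun t1 t2 t3 t4 h1 h2 h3 h4 =>
    hQ2 (t1 + 1) (t2 + 1) (t3 + 1) (t4 + 1) (by omega) (by omega) (by omega) (by omega)
  -- backward pull inside the reachable sets, for s 0
  obtain ⟨γ, hγ1, hγ2, hγ3⟩ := exists_cpull (I := I) (lo := a) (by omega) (jj 1 + 1)
    (by have := hjja 1; omega) (yw (jj 1)) (hjjw 1).2.2.2
  -- the braid solutions
  set ss : ℕ → ℕ → A := fun t i =>
    if t = 0 then (if i ≤ jj 1 then γ i else sig (jj 1) i)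
    else if t < n then (if i ≤ jj t then pii (jj t) i else sig (jj t) i)
    else pii (jj n) i with hssdef
  set idx : ℕ → ℕ := fun t =>
    if t ≤ 1 then a else if t = 2 then jj 1 + 1 else nu (jj (t - 2)) (jj (t - 1)) with hidxdef
  have hss0l : ∀ i, i ≤ jj 1 → ss 0 i = γ i := by
    intro i h
    simp only [hssdef]
    rw [if_pos h]
    simp
  have hss0r : ∀ i, jj 1 < i → ss 0 i = sig (jj 1) i := by
    intro i h
    simp only [hssdef]
    rw [if_neg (show ¬ i ≤ jj 1 by omega)]
    simp
  have hssml : ∀ t i, 1 ≤ t → t < n → i ≤ jj t → ss t i = pii (jj t) i := by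
    intro t i h1 h2 h3
    simp only [hssdef]
    rw [if_neg (show ¬ t = 0 by omega), if_pos h2, if_pos h3]
  have hssmr : ∀ t i, 1 ≤ t → t < n → jj t < i → ss t i = sig (jj t) i := by
    intro t i h1 h2 h3
    simp only [hssdef]
    rw [if_neg (show ¬ t = 0 by omega), if_pos h2, if_neg (show ¬ i ≤ jj t by omega)]
  have hssnn : ∀ i, ss n i = pii (jj n) i := by
    intro i
    simp only [hssdef]
    rw [if_neg (show ¬ n = 0 by omega), if_neg (show ¬ n < n by omega)]
  have hsspi : ∀ t i, 1 ≤ t → t ≤ n → i ≤ jj t → ss t i = pii (jj t) i := by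
    intro t i h1 h2 h3
    by_cases h : t < n
    · exact hssml t i h1 h h3
    · have ht : t = n := by omega
      subst ht
      exact hssnn i
  have hidxv1 : idx 1 = a := by
    simp [hidxdef]
  have hidxv2 : idx 2 = jj 1 + 1 := by
    simp [hidxdef]
  have hidxv3 : ∀ t, 3 ≤ t → idx t = nu (jj (t - 2)) (jj (t - 1)) := by
    intro t h
    simp only [hidxdef]
    rw [if_neg (show ¬ t ≤ 1 by omega), if_neg (show ¬ t = 2 by omega)]
  -- the merge positions behave well
  have hnuf : ∀ t, 3 ≤ t → t ≤ n →
      jj (t - 1) + 1 ≤ idx t ∧ idx t ≤ jj t ∧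
      sig (jj (t - 2)) (idx t) = sig (jj (t - 1)) (idx t) := by
    intro t h3 hn
    rw [hidxv3 t h3]
    have hub : nu (jj (t - 2)) (jj (t - 1)) ≤ jj t :=
      hQ1j (t - 2) (t - 1) t (t + 1) (by omega) (by omega) (by omega) (by omega)
    exact ⟨hnu_ge _ _ (hjjb (t - 1)), hub,
      hnu_agree _ _ (le_trans hub (le_of_lt (hjjb t)))⟩
  -- the two special backward-path agreements
  have hpi1 : pii (jj 1) a = pii (jj 2) a := by
    have hagr : pii (jj 1) (nu (eN 0) (eN 1)) = pii (jj 2) (nu (eN 0) (eN 1)) :=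
      hQ2 0 1 2 3 (by omega) (by omega) (by omega) (by omega)
    have hub : nu (eN 0) (eN 1) ≤ jj 1 :=
      hQ1 0 1 2 3 (by omega) (by omega) (by omega) (by omega)
    have hlb : a ≤ nu (eN 0) (eN 1) := by
      have h1 := hnu_ge (eN 0) (eN 1) (heNJ 1).2.1
      have h2 := (heNJ 1).1
      omega
    exact bwdP_agree G (xw (jj 1)) (xw (jj 2)) hub
      (le_trans hub (le_of_lt (hjjmono 1 2 (by omega) (by omega)))) hagr a hlb
  have hpi2 : 3 ≤ n → pii (jj 2) (jj 1 + 1) = pii (jj 3) (jj 1 + 1) := by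
    intro h3
    have hagr : pii (jj 2) (nu (eN 1) (eN 2)) = pii (jj 3) (nu (eN 1) (eN 2)) :=
      hQ2 1 2 3 4 (by omega) (by omega) (by omega) (by omega)
    have hub : nu (eN 1) (eN 2) ≤ jj 2 :=
      hQ1 1 2 3 4 (by omega) (by omega) (by omega) (by omega)
    have hlb : jj 1 + 1 ≤ nu (eN 1) (eN 2) := by
      have h1 := hnu_ge (eN 1) (eN 2) (heNJ 2).2.1
      have hbr : jj 1 = eN 2 := rfl
      omega
    exact bwdP_agree G (xw (jj 2)) (xw (jj 3)) hub
      (le_trans hub (le_of_lt (hjjmono 2 3 (by omega) (by omega)))) hagr (jj 1 + 1) hlb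
  -- the braid solutions are solutions
  have hsol : ∀ t ≤ n, IsSolutionOn I a (jj n) (ss t) := by
    intro t ht
    have hB1 : a ≤ jj 1 := hjja 1
    have hB2 : jj 1 < b := hjjb 1
    have hB3 : jj t < b := hjjb t
    have hB4 : a ≤ jj t := hjja t
    have hB5 : jj t ≤ jj n := hjjmonole t n ht (by omega)
    have hB6 : jj 1 ≤ jj n := hjjmonole 1 n (by omega) (by omega)
    have hB7 : jj n < b := hjjb n
    by_cases ht0 : t = 0
    · subst ht0
      constructor
      · intro i h1 h2
        by_cases h : i ≤ jj 1
        · rw [hss0l i h]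
          exact reach_sub _ (hγ2 i h1 (by omega))
        · rw [hss0r i (by omega)]
          exact fwdP_mem hF' (by have := hjja 1; omega) (reach_sub _ (hjjw 1).2.2.2) i
            (by omega) (by omega)
      · intro i h1 h2
        by_cases h : i + 1 ≤ jj 1
        · rw [hss0l i (by omega), hss0l (i + 1) h]
          exact hγ3 i h1 (by omega)
        · by_cases h' : i + 1 = jj 1 + 1
          · rw [hss0l i (by omega), hss0r (i + 1) (by omega)]
            have e1 : sig (jj 1) (i + 1) = yw (jj 1) := by
              rw [h']
              exact fwdP_start F (jj 1) (yw (jj 1))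
            rw [e1, ← hγ1, ← h']
            exact hγ3 i h1 (by omega)
          · rw [hss0r i (by omega), hss0r (i + 1) (by omega)]
            exact fwdP_edge hF' (by have := hjja 1; omega) (reach_sub _ (hjjw 1).2.2.2) i
              (by omega) (by omega)
    · by_cases htn : t < n
      · have ht1 : 1 ≤ t := by omega
        constructor
        · intro i h1 h2
          by_cases h : i ≤ jj t
          · rw [hssml t i ht1 htn h]
            exact bwdP_mem hG' (le_of_lt (hjjb t)) (hjjw t).2.1 i h1 h
          · rw [hssmr t i ht1 htn (by omega)]
            exact fwdP_mem hF' (by have := hjja t; omega) (reach_sub _ (hjjw t).2.2.2) i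
              (by omega) (by omega)
        · intro i h1 h2
          rcases lt_trichotomy i (jj t) with h | h | h
          · rw [hssml t i ht1 htn (by omega), hssml t (i + 1) ht1 htn (by omega)]
            exact bwdP_edge hG' (le_of_lt (hjjb t)) (hjjw t).2.1 i h1 (by omega)
          · rw [hssml t i ht1 htn (by omega), hssmr t (i + 1) ht1 htn (by omega)]
            rw [h]
            have e1 : pii (jj t) (jj t) = xw (jj t) := bwdP_start G (jj t) (xw (jj t))
            have e2 : sig (jj t) (jj t + 1) = yw (jj t) := fwdP_start F (jj t) (yw (jj t))
            rw [e1, e2]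
            exact (hjjw t).1
          · rw [hssmr t i ht1 htn h, hssmr t (i + 1) ht1 htn (by omega)]
            exact fwdP_edge hF' (by have := hjja t; omega) (reach_sub _ (hjjw t).2.2.2) i
              (by omega) (by omega)
      · have htn' : t = n := by omega
        rw [htn']
        constructor
        · intro i h1 h2
          rw [hssnn i]
          exact bwdP_mem hG' (le_of_lt (hjjb n)) (hjjw n).2.1 i h1 h2
        · intro i h1 h2
          rw [hssnn i, hssnn (i + 1)]
          exact bwdP_edge hG' (le_of_lt (hjjb n)) (hjjw n).2.1 i h1 h2
  -- index bounds and monotonicity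
  have hidxub : ∀ t, 1 ≤ t → t ≤ n → idx t ≤ jj t := by
    intro t h1 h2
    by_cases h : t = 1
    · subst h; rw [hidxv1]; exact hjja 1
    · by_cases h' : t = 2
      · subst h'
        rw [hidxv2]
        exact hjjmono 1 2 (by omega) (by omega)
      · exact (hnuf t (by omega) h2).2.1
  have hidxlb : ∀ t, 2 ≤ t → t ≤ n → jj (t - 1) + 1 ≤ idx t := by
    intro t h1 h2
    by_cases h : t = 2
    · subst h; rw [hidxv2]
    · exact (hnuf t (by omega) h2).1
  have hmono : ∀ u v, 1 ≤ u → u ≤ v → v ≤ n → idx u ≤ idx v := by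
    intro u v h1 h2 h3
    rcases Nat.eq_or_lt_of_le h2 with h | h
    · subst h; exact le_rfl
    · have hu : idx u ≤ jj u := hidxub u h1 (by omega)
      have hv : jj (v - 1) + 1 ≤ idx v := hidxlb v (by omega) h3
      have huv : jj u ≤ jj (v - 1) := hjjmonole u (v - 1) (by omega) (by omega)
      omega
  -- the meets
  have hmeet1 : ∀ t, 1 ≤ t → t ≤ n → ss (t - 2) (idx t) = ss (t - 1) (idx t) := by
    intro t h1 h2
    by_cases ht1 : t = 1
    · subst ht1; rfl
    · by_cases ht2 : t = 2
      · subst ht2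
        rw [hidxv2]
        have e1 : (2 : ℕ) - 2 = 0 := rfl
        have e2 : (2 : ℕ) - 1 = 1 := rfl
        rw [e1, e2, hss0r (jj 1 + 1) (by omega), hssmr 1 (jj 1 + 1) (by omega) (by omega)
          (by omega)]
      · have ht3 : 3 ≤ t := by omega
        obtain ⟨hl, hu, hagr⟩ := hnuf t ht3 h2
        have hj12 : jj (t - 2) < jj (t - 1) := hjjmono (t - 2) (t - 1) (by omega) (by omega)
        rw [hssmr (t - 2) (idx t) (by omega) (by omega) (by omega),
          hssmr (t - 1) (idx t) (by omega) (by omega) (by omega)]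
        exact hagr
  have hmeet2 : ∀ t, 1 ≤ t → t ≤ n → ss t (idx t) = ss (min (t + 1) n) (idx t) := by
    intro t h1 h2
    rcases Nat.eq_or_lt_of_le h2 with h | h
    · subst h; rw [min_eq_right (by omega)]
    · rw [min_eq_left (by omega)]
      by_cases ht1 : t = 1
      · subst ht1
        rw [hidxv1, hsspi 1 a (by omega) (by omega) (hjja 1),
          hsspi 2 a (by omega) (by omega) (hjja 2)]
        exact hpi1
      · by_cases ht2 : t = 2
        · subst ht2
          rw [hidxv2, hsspi 2 (jj 1 + 1) (by omega) (by omega)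
              (hjjmono 1 2 (by omega) (by omega)),
            hsspi 3 (jj 1 + 1) (by omega) (by omega)
              (le_trans (hjjmono 1 2 (by omega) (by omega)) (le_of_lt (hjjmono 2 3 (by omega) (by omega))))]
          exact hpi2 (by omega)
        · have ht3 : 3 ≤ t := by omega
          obtain ⟨hl, hu, -⟩ := hnuf t ht3 h2
          rw [hsspi t (idx t) (by omega) (by omega) hu,
            hsspi (t + 1) (idx t) (by omega) (by omega)
              (le_trans hu (le_of_lt (hjjmono t (t + 1) (by omega) (by omega))))]
          rw [hidxv3 t ht3]
          exact hQ2j (t - 2) (t - 1) t (t + 1) (by omega) (by omega) (by omega) (by omega)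
  -- start and end
  have hstart : ss 0 a ∈ reachSet I a := by
    rw [hss0l a (hjja 1)]
    exact hγ2 a le_rfl (by have := hjja 1; omega)
  have hend : ss n (jj n) ∉ reachSet I (jj n) := by
    rw [hssnn (jj n)]
    have e1 : pii (jj n) (jj n) = xw (jj n) := bwdP_start G (jj n) (xw (jj n))
    rw [e1]
    exact (hjjw n).2.2.1
  have hfinb : jj n < b := hjjb n
  exact glue_false I n p hp0 hpn hpk hPB hPE a (jj n) (by omega) (hjja n) (by omega)
    ss idx hsol hidxv1 (hidxub n (by omega) le_rfl) hmono hmeet1 hmeet2 hstart hend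

end CSPPaper
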